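/- Among all trees with k peripheral vertices and order n ≥ 3k+1, the minimum of Norm(T) is k + 2k + 3(n−3k) = 3n − 6k, achieved by the tree S̃_{n,k} obtained from identifying one endpoint each of k paths of length 3 at a common vertex and attaching n−3k−1 pendant vertices to one of the vertices at distance 2 from the leaves. -/

import Mathlib

open Finset

variable {V : Type*}

/-- Eccentricity: the maximum distance from `v` to any vertex. -/
noncomputable def ecc (G : SimpleGraph V) [Fintype V] (v : V) : ℕ :=
  Finset.univ.sup fun u => G.dist v u

/-- Diameter: the maximum eccentricity. -/
noncomputable def gdiam (G : SimpleGraph V) [Fintype V] : ℕ :=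
  Finset.univ.sup fun v => ecc G v

/-- A vertex is peripheral if its eccentricity equals the diameter. -/
noncomputable def peripheral (G : SimpleGraph V) [Fintype V] (v : V) : Prop :=
  ecc G v = gdiam G

/-- Normality: the minimum distance from `v` to a peripheral vertex. -/
noncomputable def gnorm (G : SimpleGraph V) [Fintype V] (v : V) : ℕ :=
  sInf {n | ∃ u, peripheral G u ∧ G.dist v u = n}

/-- The sum of normalities. -/
noncomputable def NormSum (G : SimpleGraph V) [Fintype V] : ℕ :=
  ∑ v, gnorm G v

/-- λ(v) = ecc(v) − norm(v). -/
noncomputable def lam (G : SimpleGraph V) [Fintype V] (v : V) : ℕ :=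
  ecc G v - gnorm G v

/-- Λ(T) = Σ_v λ(v). -/
noncomputable def LamSum (G : SimpleGraph V) [Fintype V] : ℕ :=
  ∑ v, lam G v

section General
variable {G : SimpleGraph V} [Fintype V] {u v w z : V}

lemma dist_le_ecc (v u : V) : G.dist v u ≤ ecc G v := Finset.le_sup (mem_univ u)

lemma ecc_le_gdiam (v : V) : ecc G v ≤ gdiam G := Finset.le_sup (mem_univ v)

lemma exists_ecc [Nonempty V] (v : V) : ∃ u, G.dist v u = ecc G v := by
  obtain ⟨u, -, hu⟩ := Finset.exists_mem_eq_sup (univ : Finset V) univ_nonempty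
    (fun u => G.dist v u)
  exact ⟨u, hu.symm⟩

lemma gnorm_le (h : peripheral G u) (v : V) : gnorm G v ≤ G.dist v u :=
  Nat.sInf_le ⟨u, h, rfl⟩

lemma exists_gnorm (hP : ∃ u, peripheral G u) (v : V) :
    ∃ u, peripheral G u ∧ G.dist v u = gnorm G v := by
  obtain ⟨p, hp⟩ := hP
  exact Nat.sInf_mem (⟨G.dist v p, p, hp, rfl⟩ :
    {n | ∃ u, peripheral G u ∧ G.dist v u = n}.Nonempty)

lemma gnorm_eq_zero_iff (hc : G.Connected) (hP : ∃ u, peripheral G u) (v : V) :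
    gnorm G v = 0 ↔ peripheral G v := by
  constructor
  · intro h
    obtain ⟨u, hu, hd⟩ := exists_gnorm hP v
    rw [h] at hd
    rwa [hc.dist_eq_zero_iff.mp hd]
  · intro h
    have h2 := gnorm_le h v
    simp only [SimpleGraph.dist_self] at h2
    omega

lemma le_gnorm (hP : ∃ u, peripheral G u) (hlb : ∀ u, peripheral G u → m ≤ G.dist v u) :
    m ≤ gnorm G v := by
  obtain ⟨u, hu, hd⟩ := exists_gnorm hP v
  exact hd ▸ hlb u hu

lemma gnorm_eq_of (hP : ∃ u, peripheral G u) {m : ℕ}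
    (hex : ∃ u, peripheral G u ∧ G.dist v u = m)
    (hlb : ∀ u, peripheral G u → m ≤ G.dist v u) : gnorm G v = m := by
  obtain ⟨u, hu, hd⟩ := hex
  exact le_antisymm (hd ▸ gnorm_le hu v) (le_gnorm hP hlb)

end General

section TreeLemmas
set_option linter.unusedSectionVars false
set_option linter.unusedVariables false
variable {G : SimpleGraph V} [Fintype V] [DecidableEq V] {u v w z y y₁ y₂ : V}

open SimpleGraph

lemma concat_isPath_iff {p : G.Walk u v} (h : G.Adj v w) :
    (p.concat h).IsPath ↔ p.IsPath ∧ w ∉ p.support := by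
  rw [← Walk.isPath_reverse_iff, Walk.reverse_concat, Walk.cons_isPath_iff,
    Walk.isPath_reverse_iff, Walk.support_reverse, List.mem_reverse]

lemma adj_dist_ne (hT : G.IsTree) (h : G.Adj u v) (z : V) : G.dist z u ≠ G.dist z v := by
  intro hm
  have hc := hT.isConnected
  obtain ⟨p, hp, hpl⟩ := hc.exists_path_of_dist z u
  obtain ⟨q, hq, hql⟩ := hc.exists_path_of_dist z v
  by_cases hus : u ∈ q.support
  · -- then dist z u ≤ length of takeUntil ≤ dist z v, with equality forcing u = v
    have h1 : G.dist z u ≤ (q.takeUntil u hus).length := SimpleGraph.dist_le _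
    have h2 := q.length_takeUntil_le hus
    have h3 : (q.takeUntil u hus).length + (q.dropUntil u hus).length = q.length := by
      rw [← Walk.length_append, q.take_spec hus]
    have h4 : (q.dropUntil u hus).length = 0 := by omega
    exact h.ne (Walk.eq_of_length_eq_zero h4)
  · have hq' : (q.concat h.symm).IsPath := (concat_isPath_iff h.symm).mpr ⟨hq, hus⟩
    have := (hT.existsUnique_path z u).unique hp hq'
    have hl : p.length = (q.concat h.symm).length := by rw [this]
    rw [Walk.length_concat] at hl
    omega

lemma exists_down (hc : G.Connected) (hzw : z ≠ w) :
    ∃ y, G.Adj w y ∧ G.dist z y + 1 = G.dist z w := by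
  obtain ⟨p, hpl⟩ := (hc z w).exists_walk_length_eq_dist
  cases hrev : p.reverse with
  | nil =>
    exfalso
    have : p.reverse.length = 0 := by rw [hrev]; rfl
    rw [Walk.length_reverse] at this
    rw [this] at hpl
    exact hzw (hc.dist_eq_zero_iff.mp hpl.symm).symm
  | @cons _ y _ ha q =>
    refine ⟨y, ha, ?_⟩
    have hlen : q.length + 1 = p.length := by
      have : p.reverse.length = q.length + 1 := by rw [hrev]; simp
      rw [Walk.length_reverse] at this; omega
    have h1 : G.dist z y ≤ q.length := by
      have := SimpleGraph.dist_le q.reverse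
      rwa [Walk.length_reverse] at this
    have h2 : G.dist z w ≤ G.dist z y + 1 := by
      have ht := hc.dist_triangle (u := z) (v := y) (w := w)
      have : G.dist y w ≤ 1 := by
        have := SimpleGraph.dist_le (Walk.cons ha.symm Walk.nil : G.Walk y w)
        simpa using this
      omega
    omega

lemma down_unique (hT : G.IsTree) (h₁ : G.Adj w y₁) (h₂ : G.Adj w y₂)
    (d₁ : G.dist z y₁ + 1 = G.dist z w) (d₂ : G.dist z y₂ + 1 = G.dist z w) : y₁ = y₂ := by
  have hc := hT.isConnected
  obtain ⟨p₁, hp₁, hl₁⟩ := hc.exists_path_of_dist z y₁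
  obtain ⟨p₂, hp₂, hl₂⟩ := hc.exists_path_of_dist z y₂
  have hw₁ : w ∉ p₁.support := by
    intro hws
    have := SimpleGraph.dist_le (p₁.takeUntil w hws)
    have := p₁.length_takeUntil_le hws
    omega
  have hw₂ : w ∉ p₂.support := by
    intro hws
    have := SimpleGraph.dist_le (p₂.takeUntil w hws)
    have := p₂.length_takeUntil_le hws
    omega
  have hq₁ : (p₁.concat h₁.symm).IsPath := (concat_isPath_iff h₁.symm).mpr ⟨hp₁, hw₁⟩
  have hq₂ : (p₂.concat h₂.symm).IsPath := (concat_isPath_iff h₂.symm).mpr ⟨hp₂, hw₂⟩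
  have heq := (hT.existsUnique_path z w).unique hq₁ hq₂
  -- compare getVert at index (dist z w - 1)
  have hg : ∀ (y : V) (h : G.Adj y w) (p : G.Walk z y), p.length = G.dist z w - 1 →
      (p.concat h).getVert (G.dist z w - 1) = y := by
    intro y h p hl
    rw [Walk.concat_eq_append, Walk.getVert_append]
    simp [hl]
  have e₁ : (p₁.concat h₁.symm).getVert (G.dist z w - 1) = y₁ := by
    apply hg; omega
  have e₂ : (p₂.concat h₂.symm).getVert (G.dist z w - 1) = y₂ := by
    apply hg; omega
  rw [← e₁, ← e₂, heq]

lemma dist_of_not_down (hT : G.IsTree) (hzw : z ≠ w) (hy : G.Adj w y)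
    (hne : G.dist z y + 1 ≠ G.dist z w) : G.dist z y = G.dist z w + 1 := by
  have hc := hT.isConnected
  have h1 : G.dist z y ≤ G.dist z w + 1 := by
    have ht := hc.dist_triangle (u := z) (v := w) (w := y)
    have : G.dist w y ≤ 1 := by
      have := SimpleGraph.dist_le (Walk.cons hy Walk.nil : G.Walk w y)
      simpa using this
    omega
  have h2 : G.dist z w ≤ G.dist z y + 1 := by
    have ht := hc.dist_triangle (u := z) (v := y) (w := w)
    have : G.dist y w ≤ 1 := by
      have := SimpleGraph.dist_le (Walk.cons hy.symm Walk.nil : G.Walk y w)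
      simpa using this
    omega
  have h3 := adj_dist_ne hT hy.symm z
  omega

end TreeLemmas

section LowerBound
set_option linter.unusedSectionVars false
set_option maxHeartbeats 1000000
open SimpleGraph

lemma peripheral_leaf {W : Type} [Fintype W] [DecidableEq W] {G : SimpleGraph W}
    (hT : G.IsTree) (hbig : 2 ≤ Fintype.card W) {p y₁ y₂ : W}
    (hp : peripheral G p) (h₁ : G.Adj p y₁) (h₂ : G.Adj p y₂) : y₁ = y₂ := by
  have hc := hT.isConnected
  have hne : Nonempty W := Fintype.card_pos_iff.mp (by omega)
  -- gdiam ≥ 1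
  obtain ⟨a, b, hab⟩ := Fintype.exists_pair_of_one_lt_card (α := W) (by omega)
  have hd1 : 1 ≤ gdiam G := by
    have h1 : 1 ≤ G.dist a b := hc.pos_dist_of_ne hab
    have h2 := dist_le_ecc (G := G) a b
    have h3 := ecc_le_gdiam (G := G) a
    omega
  obtain ⟨z, hz⟩ := exists_ecc (G := G) p
  rw [hp] at hz
  have hzp : z ≠ p := by
    intro h; subst h
    rw [SimpleGraph.dist_self] at hz
    omega
  obtain ⟨y₀, hy₀, hd₀⟩ := exists_down hc hzp
  have key : ∀ y, G.Adj p y → y = y₀ := by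
    intro y hy
    by_cases hcase : G.dist z y + 1 = G.dist z p
    · exact down_unique hT hy hy₀ hcase hd₀
    · exfalso
      have := dist_of_not_down hT hzp hy hcase
      have h4 : G.dist z p = gdiam G := by rw [SimpleGraph.dist_comm]; exact hz
      have h5 : G.dist y z ≤ ecc G y := dist_le_ecc y z
      have h6 : ecc G y ≤ gdiam G := ecc_le_gdiam y
      rw [SimpleGraph.dist_comm] at h5
      omega
  rw [key y₁ h₁, key y₂ h₂]

lemma lower_bound {W : Type} [Fintype W] (G : SimpleGraph W) (hT : G.IsTree)
    {n k : ℕ} (hk : 2 ≤ k) (hn : 3*k+1 ≤ n) (hcard : Fintype.card W = n)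
    (hP : {v : W | peripheral G v}.ncard = k) : 3*n - 6*k ≤ NormSum G := by
  classical
  have hc := hT.isConnected
  have hbig : 2 ≤ Fintype.card W := by omega
  have hne : Nonempty W := Fintype.card_pos_iff.mp (by omega)
  set Pf : Finset W := univ.filter (fun v => peripheral G v) with hPf
  have hPcard : Pf.card = k := by
    have h1 : {v : W | peripheral G v}.toFinset = Pf := by
      ext v; simp [hPf]
    rw [← hP, Set.ncard_eq_toFinset_card', h1]
  have hPex : ∃ u, peripheral G u := by
    have : Pf.Nonempty := Finset.card_pos.mp (by omega)
    obtain ⟨u, hu⟩ := this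
    exact ⟨u, (Finset.mem_filter.mp hu).2⟩
  set A0 : Finset W := univ.filter (fun v => gnorm G v = 0) with hA0
  set A1 : Finset W := univ.filter (fun v => gnorm G v = 1) with hA1
  set A2 : Finset W := univ.filter (fun v => gnorm G v = 2) with hA2
  set R : Finset W := univ.filter (fun v => 3 ≤ gnorm G v) with hR
  have hA0card : A0.card = k := by
    have : A0 = Pf := by
      ext v
      simp only [hA0, hPf, Finset.mem_filter, Finset.mem_univ, true_and]
      exact gnorm_eq_zero_iff hc hPex v
    rw [this, hPcard]
  -- A1 bound
  have hA1card : A1.card ≤ k := by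
    have hch : ∀ v : W, ∃ u : W, gnorm G v = 1 → peripheral G u ∧ G.Adj v u := by
      intro v
      by_cases h : gnorm G v = 1
      · obtain ⟨u, hu, hd⟩ := exists_gnorm hPex v
        rw [h] at hd
        exact ⟨u, fun _ => ⟨hu, SimpleGraph.dist_eq_one_iff_adj.mp hd⟩⟩
      · exact ⟨Classical.arbitrary W, fun h' => absurd h' h⟩
    choose f hf using hch
    rw [← hPcard]
    apply Finset.card_le_card_of_injOn f
    · intro v hv
      have hv1 : gnorm G v = 1 := (Finset.mem_filter.mp hv).2
      exact Finset.mem_filter.mpr ⟨Finset.mem_univ _, (hf v hv1).1⟩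
    · intro v₁ hv₁ v₂ hv₂ hfe
      have h1 := hf v₁ (Finset.mem_filter.mp hv₁).2
      have h2 := hf v₂ (Finset.mem_filter.mp hv₂).2
      rw [hfe] at h1
      exact peripheral_leaf hT hbig h2.1 h1.2.symm h2.2.symm
  -- A2 bound
  have hA2card : A2.card ≤ k := by
    rcases Finset.eq_empty_or_nonempty A2 with he | ⟨v₀, hv₀⟩
    · rw [he]; simp
    -- gdiam ≥ 2
    have hv₀2 : gnorm G v₀ = 2 := (Finset.mem_filter.mp hv₀).2
    have hd2 : 2 ≤ gdiam G := by
      obtain ⟨u, hu, hd⟩ := exists_gnorm hPex v₀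
      rw [hv₀2] at hd
      have h5 := dist_le_ecc (G := G) v₀ u
      have h6 := ecc_le_gdiam (G := G) v₀
      omega
    have hch : ∀ v : W, ∃ w : W, gnorm G v = 2 → gnorm G w = 1 ∧ G.Adj w v := by
      intro v
      by_cases h : gnorm G v = 2
      · obtain ⟨u, hu, hd⟩ := exists_gnorm hPex v
        rw [h] at hd
        have huv : u ≠ v := by
          intro he; subst he; rw [SimpleGraph.dist_self] at hd; omega
        obtain ⟨y, hy, hdy⟩ := exists_down hc huv
        rw [SimpleGraph.dist_comm (u := u) (v := v), hd] at hdy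
        have hyu : G.Adj y u := SimpleGraph.dist_eq_one_iff_adj.mp
          (by rw [SimpleGraph.dist_comm]; omega)
        refine ⟨y, fun _ => ⟨?_, hy.symm⟩⟩
        have hle : gnorm G y ≤ 1 := by
          have h9 := gnorm_le hu y
          rw [SimpleGraph.dist_eq_one_iff_adj.mpr hyu] at h9
          omega
        have hne0 : gnorm G y ≠ 0 := by
          intro h0
          have hyper : peripheral G y := (gnorm_eq_zero_iff hc hPex y).mp h0
          exact huv (peripheral_leaf hT hbig hyper hyu hy.symm)
        omega
      · exact ⟨Classical.arbitrary W, fun h' => absurd h' h⟩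
    choose f hf using hch
    have hmaps : ∀ v ∈ A2, f v ∈ A1 := by
      intro v hv
      have := (hf v (Finset.mem_filter.mp hv).2).1
      exact Finset.mem_filter.mpr ⟨Finset.mem_univ _, this⟩
    have hinj : Set.InjOn f A2 := by
      intro v₁ hv₁ v₂ hv₂ hfe
      have hv₁2 : gnorm G v₁ = 2 := (Finset.mem_filter.mp hv₁).2
      have hv₂2 : gnorm G v₂ = 2 := (Finset.mem_filter.mp hv₂).2
      obtain ⟨hw1, hadj1⟩ := hf v₁ hv₁2
      obtain ⟨hw2, hadj2⟩ := hf v₂ hv₂2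
      rw [hfe] at hw1 hadj1
      set w := f v₂
      -- ecc w = gdiam - 1
      obtain ⟨p, hpper, hpd⟩ := exists_gnorm hPex w
      rw [hw1] at hpd
      have hpadj : G.Adj w p := SimpleGraph.dist_eq_one_iff_adj.mp hpd
      have heccw : ecc G w = gdiam G - 1 := by
        have hub : ecc G w ≤ gdiam G := ecc_le_gdiam w
        have hneq : ecc G w ≠ gdiam G := by
          intro h
          have : gnorm G w = 0 := (gnorm_eq_zero_iff hc hPex w).mpr h
          omega
        obtain ⟨z₀, hz₀⟩ := exists_ecc (G := G) p
        rw [hpper] at hz₀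
        have h1 : G.dist p z₀ ≤ G.dist p w + G.dist w z₀ := hc.dist_triangle
        have h2 : G.dist p w = 1 := by
          rw [SimpleGraph.dist_comm]; exact hpd
        have h3 : G.dist w z₀ ≤ ecc G w := dist_le_ecc w z₀
        omega
      obtain ⟨z, hz⟩ := exists_ecc (G := G) w
      rw [heccw] at hz
      have hzw : z ≠ w := by
        intro h; subst h
        rw [SimpleGraph.dist_self] at hz
        omega
      have hdown : ∀ v, G.Adj w v → gnorm G v = 2 → G.dist z v + 1 = G.dist z w := by
        intro v hadj hv2
        by_contra hcase
        have hdv := dist_of_not_down hT hzw hadj hcase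
        have h4 : G.dist z w = gdiam G - 1 := by rw [SimpleGraph.dist_comm]; exact hz
        have h5 : G.dist v z ≤ ecc G v := dist_le_ecc v z
        have h6 : ecc G v ≤ gdiam G := ecc_le_gdiam v
        have h7 : ecc G v = gdiam G := by
          rw [SimpleGraph.dist_comm] at h5
          omega
        have : gnorm G v = 0 := (gnorm_eq_zero_iff hc hPex v).mpr h7
        omega
      exact down_unique hT hadj1 hadj2 (hdown v₁ hadj1 hv₁2) (hdown v₂ hadj2 hv₂2)
    exact (Finset.card_le_card_of_injOn f hmaps hinj).trans hA1card
  -- summation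
  have hdisj01 : Disjoint A0 A1 := by
    rw [Finset.disjoint_left]
    intro a ha hb
    simp only [hA0, hA1, Finset.mem_filter] at ha hb
    omega
  have hdisj012 : Disjoint (A0 ∪ A1) A2 := by
    rw [Finset.disjoint_left]
    intro a ha hb
    simp only [hA0, hA1, hA2, Finset.mem_filter, Finset.mem_union] at ha hb
    omega
  have hdisjR : Disjoint (A0 ∪ A1 ∪ A2) R := by
    rw [Finset.disjoint_left]
    intro a ha hb
    simp only [hA0, hA1, hA2, hR, Finset.mem_filter, Finset.mem_union] at ha hb
    omega
  have hU : A0 ∪ A1 ∪ A2 ∪ R = univ := by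
    ext v
    simp only [hA0, hA1, hA2, hR, Finset.mem_filter, Finset.mem_union, Finset.mem_univ, true_and, iff_true]
    omega
  have hcards : k + A1.card + A2.card + R.card = n := by
    have h1 : (A0 ∪ A1 ∪ A2 ∪ R).card = n := by rw [hU, Finset.card_univ, hcard]
    rw [Finset.card_union_of_disjoint hdisjR, Finset.card_union_of_disjoint hdisj012,
      Finset.card_union_of_disjoint hdisj01, hA0card] at h1
    omega
  have hsum : NormSum G = ∑ v ∈ A0, gnorm G v + ∑ v ∈ A1, gnorm G v
      + ∑ v ∈ A2, gnorm G v + ∑ v ∈ R, gnorm G v := by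
    rw [NormSum, ← hU, Finset.sum_union hdisjR, Finset.sum_union hdisj012,
      Finset.sum_union hdisj01]
  have hs1 : A1.card * 1 ≤ ∑ v ∈ A1, gnorm G v := by
    have := Finset.card_nsmul_le_sum A1 (fun v => gnorm G v) 1
      (fun v hv => by simp only [hA1, Finset.mem_filter] at hv; show _ ≤ gnorm G v; omega)
    simpa using this
  have hs2 : A2.card * 2 ≤ ∑ v ∈ A2, gnorm G v := by
    have := Finset.card_nsmul_le_sum A2 (fun v => gnorm G v) 2
      (fun v hv => by simp only [hA2, Finset.mem_filter] at hv; show _ ≤ gnorm G v; omega)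
    simpa [mul_comm] using this
  have hs3 : R.card * 3 ≤ ∑ v ∈ R, gnorm G v := by
    have := Finset.card_nsmul_le_sum R (fun v => gnorm G v) 3
      (fun v hv => by simp only [hR, Finset.mem_filter] at hv; show _ ≤ gnorm G v; omega)
    simpa [mul_comm] using this
  omega

end LowerBound

section ParentTree
set_option linter.unusedSectionVars false
open SimpleGraph

lemma walk_lipschitz {G : SimpleGraph V} (f : V → ℤ)
    (hf : ∀ u v, G.Adj u v → f u ≤ f v + 1) {u v : V} (p : G.Walk u v) :
    f u - f v ≤ (p.length : ℤ) := by
  induction p with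
  | nil => simp
  | cons ha q ih =>
    have := hf _ _ ha
    rw [SimpleGraph.Walk.length_cons]
    push_cast
    omega

lemma dist_lipschitz {G : SimpleGraph V} (hc : G.Connected) (f : V → ℤ)
    (hf : ∀ u v, G.Adj u v → f u ≤ f v + 1) (u v : V) :
    f u - f v ≤ (G.dist u v : ℤ) := by
  obtain ⟨p, hp⟩ := (hc u v).exists_walk_length_eq_dist
  rw [← hp]
  exact walk_lipschitz f hf p

lemma parent_isTree [Nonempty V] {G : SimpleGraph V} (π : V → V) (h : V → ℕ) (r : V)
    (hπr : π r = r) (hh : ∀ v, v ≠ r → h (π v) + 1 = h v)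
    (hadj : ∀ u v, G.Adj u v ↔ u ≠ v ∧ (π u = v ∨ π v = u)) : G.IsTree := by
  have hlt : ∀ v, v ≠ r → h (π v) < h v := fun v hv => by have := hh v hv; omega
  have hzero : ∀ v, h v = 0 → v = r := by
    intro v hv
    by_contra hne
    have := hh v hne
    omega
  have hself : ∀ v, v ≠ r → v ≠ π v := by
    intro v hv heq
    have := hlt v hv
    rw [← heq] at this
    omega
  have hadjpar : ∀ v, v ≠ r → G.Adj v (π v) := by
    intro v hv
    exact (hadj v (π v)).mpr ⟨hself v hv, Or.inl rfl⟩
  -- connectivity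
  have hreach : ∀ v, G.Reachable v r := by
    have : ∀ m (v : V), h v ≤ m → G.Reachable v r := by
      intro m
      induction m with
      | zero =>
        intro v hv
        rw [hzero v (by omega)]
      | succ m ih =>
        intro v hv
        by_cases hvr : v = r
        · rw [hvr]
        · exact ((hadjpar v hvr).reachable).trans (ih (π v) (by have := hh v hvr; omega))
    exact fun v => this (h v) v le_rfl
  have hconn : G.Connected := by
    rw [SimpleGraph.connected_iff]
    exact ⟨fun a b => (hreach a).trans (hreach b).symm, inferInstance⟩
  -- iterate facts
  have hiter : ∀ (m : ℕ) (u : V), h (π^[m] u) ≤ h u := by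
    intro m
    induction m with
    | zero => intro u; simp
    | succ m ih =>
      intro u
      rw [Function.iterate_succ_apply]
      refine (ih (π u)).trans ?_
      by_cases hu : u = r
      · rw [hu, hπr]
      · have := hh u hu; omega
  refine ⟨hconn, ?_⟩
  rw [SimpleGraph.isAcyclic_iff_forall_adj_isBridge]
  have main : ∀ v : V, v ≠ π v → G.IsBridge s(v, π v) := by
    intro v hvne
    have hvr : v ≠ r := by
      intro hv
      rw [hv, hπr] at hvne
      exact hvne rfl
    have hS : ¬ ∃ m, π^[m] (π v) = v := by
      rintro ⟨m, hm⟩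
      have h1 := hiter m (π v)
      rw [hm] at h1
      have := hlt v hvr
      omega
    rw [SimpleGraph.isBridge_iff]
    rw [SimpleGraph.reachable_delete_edges_iff_exists_walk]
    rintro ⟨p, hp⟩
    apply hp
    have key : ∀ (a b : V) (q : G.Walk a b), (∃ m, π^[m] a = v) → (¬ ∃ m, π^[m] b = v) →
        s(v, π v) ∈ q.edges := by
      intro a b q
      induction q with
      | nil => intro h1 h2; exact absurd h1 h2
      | @cons a c b ha q ih =>
        intro h1 h2
        rw [SimpleGraph.Walk.edges_cons]
        by_cases hcS : ∃ m, π^[m] c = v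
        · exact List.mem_cons_of_mem _ (ih hcS h2)
        · suffices hsac : s(a, c) = s(v, π v) by
            rw [← hsac]; exact List.mem_cons_self
          rcases (hadj a c).mp ha with ⟨hne, hac | hca⟩
          · obtain ⟨m, hm⟩ := h1
            cases m with
            | zero =>
              simp only [Function.iterate_zero, id_eq] at hm
              subst hm
              rw [← hac]
            | succ m' =>
              exfalso
              apply hcS
              rw [Function.iterate_succ_apply, hac] at hm
              exact ⟨m', hm⟩
          · exfalso
            apply hcS
            obtain ⟨m, hm⟩ := h1
            exact ⟨m + 1, by rw [Function.iterate_succ_apply, hca, hm]⟩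
    exact key v (π v) p ⟨0, rfl⟩ hS
  intro a b hab
  rcases (hadj a b).mp hab with ⟨hne, hpab | hpba⟩
  · have := main a (by rw [hpab]; exact hne)
    rwa [hpab] at this
  · have := main b (by rw [hpba]; exact hne.symm)
    rw [hpba] at this
    rwa [Sym2.eq_swap] at this

end ParentTree

section Construction
open SimpleGraph

/-- height of vertex value -/
def htN (k m : ℕ) : ℕ :=
  if m = 0 then 0 else if m ≤ k then 1 else if m ≤ 2*k then 2 else if m ≤ 3*k then 3 else 2

/-- parent of vertex value -/
def parN (k m : ℕ) : ℕ :=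
  if m ≤ k then 0 else if m ≤ 3*k then m - k else 1

/-- branch of vertex value -/
def brN (k m : ℕ) : ℕ :=
  if m = 0 then 0 else if m ≤ k then m else if m ≤ 2*k then m - k
  else if m ≤ 3*k then m - 2*k else 1

/-- signed potential towards branch i -/
def fB (k i m : ℕ) : ℤ :=
  if brN k m = i then (htN k m : ℤ) else -(htN k m : ℤ)

lemma parN_lt (k : ℕ) {n : ℕ} (v : Fin n) : parN k v.val < n := by
  have h1 := v.isLt
  have h2 := v.pos
  unfold parN
  split_ifs <;> omega

/-- the parent map on `Fin n` -/
def parF (k : ℕ) {n : ℕ} (v : Fin n) : Fin n := ⟨parN k v.val, parN_lt k v⟩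

/-- the extremal tree -/
def sTree (k n : ℕ) : SimpleGraph (Fin n) := SimpleGraph.fromRel (fun u v => parF k u = v)

lemma parN_eq0 (k m : ℕ) (h1 : m ≤ k) : parN k m = 0 := by
  rw [parN, if_pos h1]

lemma parN_eq_sub (k m : ℕ) (h1 : ¬ m ≤ k) (h3 : m ≤ 3*k) : parN k m = m - k := by
  rw [parN, if_neg h1, if_pos h3]

lemma parN_eq1 (k m : ℕ) (h1 : ¬ m ≤ k) (h3 : ¬ m ≤ 3*k) : parN k m = 1 := by
  rw [parN, if_neg h1, if_neg h3]

lemma htN_par (k m : ℕ) (hk : 2 ≤ k) (hm : m ≠ 0) : htN k (parN k m) + 1 = htN k m := by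
  by_cases h1 : m ≤ k
  · rw [parN_eq0 k m h1]; unfold htN; split_ifs <;> first | omega | exact ‹False›.elim
  · by_cases h3 : m ≤ 3*k
    · rw [parN_eq_sub k m h1 h3]; unfold htN; split_ifs <;> first | omega | exact ‹False›.elim
    · rw [parN_eq1 k m h1 h3]; unfold htN; split_ifs <;> first | omega | exact ‹False›.elim

lemma brN_par (k m : ℕ) (hk : 2 ≤ k) (hm : m ≠ 0) :
    parN k m = 0 ∨ brN k (parN k m) = brN k m := by
  by_cases h1 : m ≤ k
  · exact Or.inl (parN_eq0 k m h1)
  · right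
    by_cases h3 : m ≤ 3*k
    · rw [parN_eq_sub k m h1 h3]; unfold brN; split_ifs <;> first | omega | exact ‹False›.elim
    · rw [parN_eq1 k m h1 h3]; unfold brN; split_ifs <;> first | omega | exact ‹False›.elim

lemma htN_le (k m : ℕ) : htN k m ≤ 3 := by unfold htN; split_ifs <;> first | omega | exact ‹False›.elim

lemma parN_le (k m : ℕ) (hk : 2 ≤ k) : parN k m ≤ 2*k := by
  unfold parN; split_ifs <;> omega

lemma brN_zero (k : ℕ) : brN k 0 = 0 := by rw [brN, if_pos rfl]

lemma lipN (k i m m' : ℕ) (hk : 2 ≤ k) (hi1 : 1 ≤ i)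
    (hne : m ≠ m') (hpar : parN k m' = m) :
    fB k i m ≤ fB k i m' + 1 ∧ fB k i m' ≤ fB k i m + 1 := by
  have hm' : m' ≠ 0 := by
    intro h
    rw [h, parN_eq0 k 0 (by omega)] at hpar
    rw [h] at hne
    exact hne hpar.symm
  have hht : htN k m + 1 = htN k m' := by rw [← hpar]; exact htN_par k m' hk hm'
  have hle := htN_le k m'
  have hle2 := htN_le k m
  rcases brN_par k m' hk hm' with h0 | heq
  · rw [hpar] at h0
    subst h0
    have hb : brN k 0 ≠ i := by rw [brN_zero]; omega
    have hh0 : htN k 0 = 0 := by rw [htN, if_pos rfl]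
    unfold fB
    rw [if_neg hb, hh0]
    split_ifs <;> push_cast <;> omega
  · rw [hpar] at heq
    unfold fB
    by_cases hbi : brN k m' = i
    · rw [if_pos hbi, if_pos (heq.trans hbi)]
      push_cast; omega
    · rw [if_neg hbi, if_neg (fun h => hbi (heq ▸ h))]
      push_cast; omega

end Construction

section ConstructionVals
set_option linter.unreachableTactic false
set_option linter.unusedTactic false
open Finset

lemma htN_eq3 (k m : ℕ) (h1 : 2*k+1 ≤ m) (h2 : m ≤ 3*k) : htN k m = 3 := by
  unfold htN; split_ifs <;> omega

lemma htN_lt3 (k m : ℕ) (h : ¬(2*k+1 ≤ m ∧ m ≤ 3*k)) : htN k m ≤ 2 := by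
  unfold htN; split_ifs <;> omega

lemma htN_pend (k m : ℕ) (h : 3*k+1 ≤ m) : htN k m = 2 := by
  unfold htN; split_ifs <;> omega

lemma brN_pp (k m : ℕ) (h1 : 2*k+1 ≤ m) (h2 : m ≤ 3*k) : brN k m = m - 2*k := by
  unfold brN; split_ifs <;> omega

lemma brN_pend (k m : ℕ) (h : 3*k+1 ≤ m) : brN k m = 1 := by
  unfold brN; split_ifs <;> omega

lemma fB_p_self (k m : ℕ) (h1 : 2*k+1 ≤ m) (h2 : m ≤ 3*k) : fB k (m - 2*k) m = 3 := by
  rw [fB, if_pos (brN_pp k m h1 h2), htN_eq3 k m h1 h2]; norm_num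

lemma fB_p_other (k m m' : ℕ) (h1 : 2*k+1 ≤ m) (h2 : m ≤ 3*k)
    (h1' : 2*k+1 ≤ m') (h2' : m' ≤ 3*k) (hne : m ≠ m') : fB k (m - 2*k) m' = -3 := by
  rw [fB, if_neg (by rw [brN_pp k m' h1' h2']; omega), htN_eq3 k m' h1' h2']; norm_num

lemma fB_zero (k i : ℕ) (hi : 1 ≤ i) : fB k i 0 = 0 := by
  rw [fB]
  have hb : brN k 0 = 0 := by unfold brN; split_ifs <;> omega
  have hh : htN k 0 = 0 := by unfold htN; split_ifs <;> omega
  rw [if_neg (by omega), hh]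
  simp

lemma fB_pend (k i m : ℕ) (hi : 2 ≤ i) (hm : 3*k+1 ≤ m) : fB k i m = -2 := by
  rw [fB, if_neg (by rw [brN_pend k m hm]; omega), htN_pend k m hm]; norm_num

/-- the normality as a function of the vertex value -/
def gN (k m : ℕ) : ℕ :=
  if m = 0 then 3 else if m ≤ k then 2 else if m ≤ 2*k then 1
  else if m ≤ 3*k then 0 else 3

lemma gN_sum (n k : ℕ) (hk : 2 ≤ k) (hn : 3*k+1 ≤ n) :
    ∑ m ∈ Finset.range n, gN k m = 3*n - 6*k := by
  induction n, hn using Nat.le_induction with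
  | base =>
    have c0 : ∑ m ∈ Finset.Ico 0 1, gN k m = 3 := by
      rw [show Finset.Ico 0 1 = {0} from rfl, Finset.sum_singleton]
      unfold gN; split_ifs <;> omega
    have hconst : ∀ (a b c : ℕ), (∀ m, a ≤ m → m < b → gN k m = c) →
        ∑ m ∈ Finset.Ico a b, gN k m = (b - a) * c := by
      intro a b c hcc
      have he : ∑ m ∈ Finset.Ico a b, gN k m = ∑ _m ∈ Finset.Ico a b, c :=
        Finset.sum_congr rfl
          (fun m hm => hcc m (Finset.mem_Ico.mp hm).1 (Finset.mem_Ico.mp hm).2)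
      rw [he, Finset.sum_const, Nat.card_Ico, smul_eq_mul]
    have c1 := hconst 1 (k+1) 2 (fun m hm1 hm2 => by unfold gN; split_ifs <;> omega)
    have c2 := hconst (k+1) (2*k+1) 1 (fun m hm1 hm2 => by unfold gN; split_ifs <;> omega)
    have c3 := hconst (2*k+1) (3*k+1) 0 (fun m hm1 hm2 => by unfold gN; split_ifs <;> omega)
    have s1 := Finset.sum_Ico_consecutive (gN k) (by omega : (0:ℕ) ≤ 1) (by omega : 1 ≤ k+1)
    have s2 := Finset.sum_Ico_consecutive (gN k) (by omega : (0:ℕ) ≤ k+1)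
      (by omega : k+1 ≤ 2*k+1)
    have s3 := Finset.sum_Ico_consecutive (gN k) (by omega : (0:ℕ) ≤ 2*k+1)
      (by omega : 2*k+1 ≤ 3*k+1)
    rw [Finset.range_eq_Ico, ← s3, ← s2, ← s1, c0, c1, c2, c3]
    ring_nf
    omega
  | succ n hn ih =>
    rw [Finset.sum_range_succ, ih]
    have : gN k n = 3 := by unfold gN; split_ifs <;> omega
    rw [this]
    omega

end ConstructionVals

section MainConstruction
set_option linter.unusedSectionVars false
set_option maxHeartbeats 1600000
open SimpleGraph

lemma construction (n k : ℕ) (hk : 2 ≤ k) (hn : 3*k+1 ≤ n) :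
    ∃ G : SimpleGraph (Fin n), G.IsTree ∧
      {v : Fin n | peripheral G v}.ncard = k ∧ NormSum G = 3*n - 6*k := by
  classical
  have hn0 : 0 < n := by omega
  have hnem : Nonempty (Fin n) := ⟨⟨0, hn0⟩⟩
  set G := sTree k n with hG
  set r : Fin n := ⟨0, hn0⟩ with hr
  have hadj : ∀ u v : Fin n, G.Adj u v ↔ u ≠ v ∧ (parF k u = v ∨ parF k v = u) := by
    intro u v
    rw [hG, sTree, SimpleGraph.fromRel_adj]
  have hadjval : ∀ u v : Fin n, G.Adj u v ↔
      u.val ≠ v.val ∧ (parN k u.val = v.val ∨ parN k v.val = u.val) := by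
    intro u v
    rw [hadj]
    constructor
    · rintro ⟨h1, h2 | h2⟩
      · exact ⟨fun h => h1 (Fin.ext h), Or.inl (congrArg Fin.val h2)⟩
      · exact ⟨fun h => h1 (Fin.ext h), Or.inr (congrArg Fin.val h2)⟩
    · rintro ⟨h1, h2 | h2⟩
      · exact ⟨fun h => h1 (congrArg Fin.val h), Or.inl (Fin.ext h2)⟩
      · exact ⟨fun h => h1 (congrArg Fin.val h), Or.inr (Fin.ext h2)⟩
  have hT : G.IsTree := by
    refine parent_isTree (parF k) (fun v => htN k v.val) r (Fin.ext ?_) ?_ hadj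
    · show parN k 0 = 0
      exact parN_eq0 k 0 (by omega)
    · intro v hv
      have hv0 : v.val ≠ 0 := fun h => hv (Fin.ext h)
      exact htN_par k v.val hk hv0
  have hc := hT.isConnected
  -- distance upper bounds
  have hdistr : ∀ m (v : Fin n), htN k v.val ≤ m → G.dist v r ≤ htN k v.val := by
    intro m
    induction m with
    | zero =>
      intro v hv
      have hzero : htN k v.val = 0 → v.val = 0 := by
        intro h
        unfold htN at h
        split_ifs at h <;> omega
      have : v = r := Fin.ext (hzero (by omega))
      rw [this, SimpleGraph.dist_self]
      omega
    | succ m ih =>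
      intro v hv
      by_cases hvr : v = r
      · rw [hvr, SimpleGraph.dist_self]; omega
      · have hv0 : v.val ≠ 0 := fun h => hvr (Fin.ext h)
        have hht := htN_par k v.val hk hv0
        have h1 : G.dist v r ≤ G.dist v (parF k v) + G.dist (parF k v) r := hc.dist_triangle
        have h2 : G.Adj v (parF k v) := by
          rw [hadjval]
          refine ⟨fun heq => ?_, Or.inl rfl⟩
          rw [← show (v : ℕ) = parN k v.val from heq] at hht
          omega
        have h3 : G.dist v (parF k v) = 1 := SimpleGraph.dist_eq_one_iff_adj.mpr h2
        have h4 := ih (parF k v) (by show htN k (parN k v.val) ≤ m; omega)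
        show G.dist v r ≤ htN k v.val
        have h5 : G.dist (parF k v) r ≤ htN k (parN k v.val) := h4
        omega
  have hdr : ∀ v : Fin n, G.dist v r ≤ htN k v.val := fun v => hdistr _ v le_rfl
  have hdub : ∀ u v : Fin n, G.dist u v ≤ htN k u.val + htN k v.val := by
    intro u v
    have h1 : G.dist u v ≤ G.dist u r + G.dist r v := hc.dist_triangle
    have h2 := hdr u
    have h3 := hdr v
    have h4 : G.dist r v = G.dist v r := SimpleGraph.dist_comm
    omega
  -- Lipschitz lower bounds
  have hlip : ∀ i, 1 ≤ i → ∀ u v : Fin n, G.Adj u v → fB k i u.val ≤ fB k i v.val + 1 := by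
    intro i hi u v huv
    rcases (hadjval u v).mp huv with ⟨h1, h2 | h2⟩
    · exact (lipN k i v.val u.val hk hi (Ne.symm h1) h2).2
    · exact (lipN k i u.val v.val hk hi h1 h2).1
  have hdlb : ∀ i, 1 ≤ i → ∀ u v : Fin n, fB k i u.val - fB k i v.val ≤ (G.dist u v : ℤ) :=
    fun i hi u v => dist_lipschitz hc (fun w => fB k i w.val) (hlip i hi) u v
  -- distance between distinct peripheral candidates is ≥ 6
  have h6 : ∀ u v : Fin n, 2*k+1 ≤ u.val → u.val ≤ 3*k → 2*k+1 ≤ v.val → v.val ≤ 3*k →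
      u.val ≠ v.val → 6 ≤ G.dist u v := by
    intro u v hu1 hu2 hv1 hv2 huv
    have hl := hdlb (u.val - 2*k) (by omega) u v
    rw [fB_p_self k u.val hu1 hu2, fB_p_other k u.val v.val hu1 hu2 hv1 hv2 huv] at hl
    omega
  have hecc : ∀ v : Fin n, ecc G v ≤ htN k v.val + 3 := by
    intro v
    refine Finset.sup_le fun u _ => ?_
    have := hdub v u
    have := htN_le k u.val
    omega
  have heccp : ∀ v : Fin n, 2*k+1 ≤ v.val → v.val ≤ 3*k → ecc G v = 6 := by
    intro v h1 h2
    have hub : ecc G v ≤ 6 := by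
      have := hecc v
      rw [htN_eq3 k v.val h1 h2] at this
      omega
    have hlb : 6 ≤ ecc G v := by
      set j : ℕ := if v.val = 2*k+1 then 2*k+2 else 2*k+1 with hj
      have hjr : 2*k+1 ≤ j ∧ j ≤ 3*k ∧ j ≠ v.val := by
        rw [hj]; split_ifs <;> omega
      set u : Fin n := ⟨j, by omega⟩ with hu
      have := h6 u v hjr.1 hjr.2.1 h1 h2 hjr.2.2
      have hle := dist_le_ecc (G := G) v u
      rw [SimpleGraph.dist_comm] at this
      omega
    omega
  have hgd : gdiam G = 6 := by
    have hub : gdiam G ≤ 6 := by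
      refine Finset.sup_le fun v _ => ?_
      have := hecc v
      have := htN_le k v.val
      omega
    have hlb : 6 ≤ gdiam G := by
      have h1 : ecc G (⟨2*k+1, by omega⟩ : Fin n) = 6 := heccp _ (by simp) (by simp; omega)
      have := ecc_le_gdiam (G := G) (⟨2*k+1, by omega⟩ : Fin n)
      omega
    omega
  have hper : ∀ v : Fin n, peripheral G v ↔ (2*k+1 ≤ v.val ∧ v.val ≤ 3*k) := by
    intro v
    constructor
    · intro hp
      by_contra hcon
      have h1 : htN k v.val ≤ 2 := htN_lt3 k v.val hcon
      have h2 := hecc v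
      rw [peripheral, hgd] at hp
      omega
    · intro ⟨h1, h2⟩
      rw [peripheral, hgd]
      exact heccp v h1 h2
  have hPex : ∃ u, peripheral G u :=
    ⟨⟨2*k+1, by omega⟩, (hper _).mpr ⟨by simp, by simp; omega⟩⟩
  refine ⟨G, hT, ?_, ?_⟩
  · -- cardinality of the periphery
    have hset : {v : Fin n | peripheral G v} = {v : Fin n | 2*k+1 ≤ v.val ∧ v.val ≤ 3*k} :=
      Set.ext fun v => hper v
    rw [hset, Set.ncard_eq_toFinset_card', Set.toFinset_setOf]
    have hinj := Finset.card_image_of_injective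
      (Finset.univ.filter fun v : Fin n => 2*k+1 ≤ v.val ∧ v.val ≤ 3*k) Fin.val_injective
    have himg : (Finset.univ.filter fun v : Fin n => 2*k+1 ≤ v.val ∧ v.val ≤ 3*k).image Fin.val
        = Finset.Icc (2*k+1) (3*k) := by
      ext m
      simp only [Finset.mem_image, Finset.mem_filter, Finset.mem_univ, true_and,
        Finset.mem_Icc]
      constructor
      · rintro ⟨v, hv, rfl⟩; exact hv
      · intro hm; exact ⟨⟨m, by omega⟩, hm, rfl⟩
    rw [← hinj, himg, Nat.card_Icc]
    omega
  · -- NormSum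
    have hge2 : ∀ u v : Fin n, v ≠ u → ¬ G.Adj v u → 2 ≤ G.dist v u := by
      intro u v hne hnadj
      have h2 : G.dist v u ≠ 1 := fun h => hnadj (SimpleGraph.dist_eq_one_iff_adj.mp h)
      have := hc.pos_dist_of_ne hne
      omega
    have hg : ∀ v : Fin n, gnorm G v = gN k v.val := by
      intro v
      by_cases hp : 2*k+1 ≤ v.val ∧ v.val ≤ 3*k
      · -- peripheral vertex
        have : gnorm G v = 0 := (gnorm_eq_zero_iff hc hPex v).mpr ((hper v).mpr hp)
        rw [this]; unfold gN; split_ifs <;> omega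
      · by_cases hb : k+1 ≤ v.val ∧ v.val ≤ 2*k
        · -- b-vertex : gnorm = 1
          have hval : gnorm G v = 1 := by
            refine gnorm_eq_of hPex ⟨⟨k + v.val, by omega⟩, (hper _).mpr ⟨?_, ?_⟩, ?_⟩ ?_
            · simp; omega
            · simp; omega
            · refine SimpleGraph.dist_eq_one_iff_adj.mpr ?_
              rw [hadjval]
              refine ⟨by simp; omega, Or.inr ?_⟩
              show parN k (k + v.val) = v.val
              rw [parN_eq_sub k _ (by omega) (by omega)]
              omega
            · intro u hu
              have hu' := (hper u).mp hu
              have : v ≠ u := fun h => by rw [h] at hb; omega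
              have := hc.pos_dist_of_ne this
              omega
          rw [hval]; unfold gN; split_ifs <;> omega
        · by_cases ha : 1 ≤ v.val ∧ v.val ≤ k
          · -- a-vertex : gnorm = 2
            have hval : gnorm G v = 2 := by
              have hnadj : ∀ u : Fin n, 2*k+1 ≤ u.val → u.val ≤ 3*k → ¬ G.Adj v u := by
                intro u h1 h2 hadj'
                rcases (hadjval v u).mp hadj' with ⟨hne', hp1 | hp2⟩
                · rw [parN_eq0 k v.val (by omega)] at hp1; omega
                · rw [parN_eq_sub k u.val (by omega) (by omega)] at hp2; omega
              refine gnorm_eq_of hPex ⟨⟨2*k + v.val, by omega⟩, (hper _).mpr ⟨?_, ?_⟩, ?_⟩ ?_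
              · simp; omega
              · simp; omega
              · -- distance exactly 2
                set b : Fin n := ⟨k + v.val, by omega⟩ with hbv
                set u : Fin n := ⟨2*k + v.val, by omega⟩ with huv
                have hab : G.Adj v b := by
                  rw [hadjval]
                  refine ⟨by show v.val ≠ k + v.val; omega, Or.inr ?_⟩
                  show parN k (k + v.val) = v.val
                  rw [parN_eq_sub k _ (by omega) (by omega)]; omega
                have hbu : G.Adj b u := by
                  rw [hadjval]
                  refine ⟨by show k + v.val ≠ 2*k + v.val; omega, Or.inr ?_⟩
                  show parN k (2*k + v.val) = k + v.val
                  rw [parN_eq_sub k _ (by omega) (by omega)]; omega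
                have hub2 : G.dist v u ≤ 2 := by
                  have := SimpleGraph.dist_le (Walk.cons hab (Walk.cons hbu Walk.nil))
                  simpa using this
                have hlb2 : 2 ≤ G.dist v u := by
                  refine hge2 u v (fun h => ?_) (hnadj u (by show 2*k+1 ≤ 2*k + v.val; omega) (by show 2*k + v.val ≤ 3*k; omega))
                  have hvv : v.val = 2*k + v.val := congrArg Fin.val h
                  omega
                omega
              · intro u hu
                have hu' := (hper u).mp hu
                refine hge2 u v (fun h => ?_) (hnadj u hu'.1 hu'.2)
                have hvv : v.val = u.val := congrArg Fin.val h
                omega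
            rw [hval]; unfold gN; split_ifs <;> omega
          · by_cases h0 : v.val = 0
            · -- root : gnorm = 3
              have hval : gnorm G v = 3 := by
                have hlb3 : ∀ u : Fin n, 2*k+1 ≤ u.val → u.val ≤ 3*k → 3 ≤ G.dist v u := by
                  intro u h1 h2
                  have hl := hdlb (u.val - 2*k) (by omega) u v
                  rw [fB_p_self k u.val h1 h2] at hl
                  have : fB k (u.val - 2*k) v.val = 0 := by rw [h0]; exact fB_zero _ _ (by omega)
                  rw [this] at hl
                  rw [SimpleGraph.dist_comm]
                  omega
                refine gnorm_eq_of hPex ⟨⟨2*k+1, by omega⟩, (hper _).mpr ⟨by simp, by simp; omega⟩, ?_⟩ ?_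
                · have hub3 : G.dist v (⟨2*k+1, by omega⟩ : Fin n) ≤ 3 := by
                    have h1 := hdr (⟨2*k+1, by omega⟩ : Fin n)
                    have h2 : (⟨2*k+1, by omega⟩ : Fin n).val = 2*k+1 := rfl
                    rw [htN_eq3 k _ (by rw [h2]) (by rw [h2]; omega)] at h1
                    have h3 : v = r := Fin.ext h0
                    rw [h3, SimpleGraph.dist_comm]
                    exact h1
                  have := hlb3 ⟨2*k+1, by omega⟩ (by simp) (by simp; omega)
                  omega
                · intro u hu
                  have hu' := (hper u).mp hu
                  exact hlb3 u hu'.1 hu'.2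
              rw [hval]; unfold gN; split_ifs <;> omega
            · -- pendant vertex : v.val ≥ 3k+1, gnorm = 3
              have hpend : 3*k+1 ≤ v.val := by omega
              have hval : gnorm G v = 3 := by
                set u1 : Fin n := ⟨2*k+1, by omega⟩ with hu1
                have hd3 : G.dist v u1 = 3 := by
                  have hub3 : G.dist v u1 ≤ 3 := by
                    set w1 : Fin n := ⟨1, by omega⟩ with hw1
                    set w2 : Fin n := ⟨k+1, by omega⟩ with hw2
                    have ha1 : G.Adj v w1 := by
                      rw [hadjval]
                      refine ⟨by simp [hw1]; omega, Or.inl ?_⟩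
                      show parN k v.val = 1
                      rw [parN_eq1 k v.val (by omega) (by omega)]
                    have ha2 : G.Adj w1 w2 := by
                      rw [hadjval]
                      refine ⟨by simp [hw1, hw2]; omega, Or.inr ?_⟩
                      show parN k (k+1) = 1
                      rw [parN_eq_sub k (k+1) (by omega) (by omega)]; omega
                    have ha3 : G.Adj w2 u1 := by
                      rw [hadjval]
                      refine ⟨by simp [hw2, hu1]; omega, Or.inr ?_⟩
                      show parN k (2*k+1) = k+1
                      rw [parN_eq_sub k (2*k+1) (by omega) (by omega)]; omega
                    have := SimpleGraph.dist_le
                      (Walk.cons ha1 (Walk.cons ha2 (Walk.cons ha3 Walk.nil)))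
                    simpa using this
                  have hlb3 : 3 ≤ G.dist v u1 := by
                    have hne1 : v ≠ u1 := by
                      intro h
                      have : v.val = u1.val := congrArg Fin.val h
                      simp [hu1] at this
                      omega
                    have hnadj1 : ¬ G.Adj v u1 := by
                      intro hadj'
                      rcases (hadjval v u1).mp hadj' with ⟨hne', hp1 | hp2⟩
                      · rw [parN_eq1 k v.val (by omega) (by omega)] at hp1
                        have : u1.val = 2*k+1 := rfl
                        omega
                      · have hq : parN k u1.val = k+1 := by
                          show parN k (2*k+1) = k+1
                          rw [parN_eq_sub k (2*k+1) (by omega) (by omega)]; omega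
                        rw [hq] at hp2
                        omega
                    have hne2 : ¬ G.dist v u1 = 2 := by
                      intro h2d
                      obtain ⟨p, hp⟩ := (hc v u1).exists_walk_length_eq_dist
                      rw [h2d] at hp
                      set w := p.getVert 1 with hwdef
                      have haw : G.Adj v w := by
                        have := p.adj_getVert_succ (i := 0) (by omega)
                        rwa [p.getVert_zero] at this
                      have hwu : G.Adj w u1 := by
                        have h5 := p.adj_getVert_succ (i := 1) (by omega)
                        have h6 : p.getVert 2 = u1 := by
                          have := p.getVert_of_length_le (i := 2) (by omega)
                          exact this
                        rwa [h6] at h5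
                      -- w must have value 1 (only neighbour of v) and also k+1, contradiction
                      have hw1 : w.val = 1 := by
                        rcases (hadjval v w).mp haw with ⟨hne', hp1 | hp2⟩
                        · rw [parN_eq1 k v.val (by omega) (by omega)] at hp1
                          omega
                        · have := parN_le k w.val hk
                          omega
                      rcases (hadjval w u1).mp hwu with ⟨hne', hp1 | hp2⟩
                      · rw [hw1, parN_eq0 k 1 (by omega)] at hp1
                        have : u1.val = 2*k+1 := rfl
                        omega
                      · have hq : parN k u1.val = k+1 := by
                          show parN k (2*k+1) = k+1
                          rw [parN_eq_sub k (2*k+1) (by omega) (by omega)]; omega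
                        rw [hq, hw1] at hp2
                        omega
                    have := hge2 u1 v hne1 hnadj1
                    omega
                  omega
                refine gnorm_eq_of hPex
                  ⟨u1, (hper _).mpr ⟨by simp [hu1], by simp [hu1]; omega⟩, hd3⟩ ?_
                intro u hu
                have hu' := (hper u).mp hu
                by_cases hj : u.val = 2*k+1
                · have : u = u1 := Fin.ext (by rw [hj])
                  rw [this, hd3]
                · -- other branch : distance ≥ 5
                  have hl := hdlb (u.val - 2*k) (by omega) u v
                  rw [fB_p_self k u.val hu'.1 hu'.2,
                    fB_pend k (u.val - 2*k) v.val (by omega) hpend] at hl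
                  rw [SimpleGraph.dist_comm]
                  omega
              rw [hval]; unfold gN; split_ifs <;> omega
    rw [NormSum]
    rw [Finset.sum_congr rfl (fun v _ => hg v)]
    rw [Fin.sum_univ_eq_sum_range (fun m => gN k m) n]
    exact gN_sum n k hk hn

end MainConstruction

theorem stmt_19 (n k : ℕ) (hk : 2 ≤ k) (hn : 3 * k + 1 ≤ n) :
    (∀ (W : Type) [Fintype W] (G : SimpleGraph W), G.IsTree →
      Fintype.card W = n → {v : W | peripheral G v}.ncard = k →
      3 * n - 6 * k ≤ NormSum G) ∧
    (∃ G : SimpleGraph (Fin n), G.IsTree ∧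
      {v : Fin n | peripheral G v}.ncard = k ∧ NormSum G = 3 * n - 6 * k) := by
  constructor
  · intro W _ G hT hcard hP
    exact lower_bound G hT hk hn hcard hP
  · exact construction n k hk hn
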